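/- arXiv:1809.02314 — 6 statements merged into one kernel-verified Lean document; each statement's English description precedes it below -/
import Mathlib

section
/- Let l be a nonnegative integer, C ∈ [0,1], v* ≥ 0, and let Δ_1, …, Δ_l and r_1, …, r_l be nonnegative reals such that Δ_i ≥ C·(v* − Σ_{j=1}^{i−1} Δ_j) − r_i for every i ∈ [l]. Then Σ_{i=1}^{l} Δ_i ≥ (1 − (1 − C)^l)·v* − Σ_{i=1}^{l} r_i ≥ (1 − exp(−C·l))·v* − Σ_{i=1}^{l} r_i. -/
lemma aux0 (C vstar : ℝ) (hC0 : 0 ≤ C) (hC1 : C ≤ 1) (hv : 0 ≤ vstar)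
    (Δ r : ℕ → ℝ) : ∀ l : ℕ, (∀ i, i < l → 0 ≤ r i) →
    (∀ i, i < l → Δ i ≥ C * (vstar - ∑ j ∈ Finset.range i, Δ j) - r i) →
    ∑ i ∈ Finset.range l, Δ i ≥
        (1 - (1 - C) ^ l) * vstar - ∑ i ∈ Finset.range l, r i := by
  intro l
  induction l with
  | zero => simp
  | succ n ih =>
    intro hr h
    have ihn := ih (fun i hi => hr i (hi.trans (Nat.lt_succ_self n)))
      (fun i hi => h i (hi.trans (Nat.lt_succ_self n)))
    have hn := h n (Nat.lt_succ_self n)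
    have hRn : 0 ≤ ∑ i ∈ Finset.range n, r i :=
      Finset.sum_nonneg fun i hi => hr i ((Finset.mem_range.mp hi).trans (Nat.lt_succ_self n))
    rw [Finset.sum_range_succ, Finset.sum_range_succ]
    have h1C : 0 ≤ 1 - C := by linarith
    have hps : (1 - C) ^ (n + 1) = (1 - C) ^ n * (1 - C) := pow_succ _ _
    nlinarith [mul_le_mul_of_nonneg_left ihn h1C, mul_nonneg hRn hC0]

/-- If `Δ i ≥ C * (v* - ∑_{j<i} Δ j) - r i` for every `i < l`, with
`C ∈ [0,1]`, `v* ≥ 0` and all `Δ i, r i` nonnegative, then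
`∑_{i<l} Δ i ≥ (1 - (1 - C)^l) v* - ∑_{i<l} r i ≥ (1 - exp (-C l)) v* - ∑_{i<l} r i`. -/
theorem stmt0 (l : ℕ) (C vstar : ℝ) (hC0 : 0 ≤ C) (hC1 : C ≤ 1) (hv : 0 ≤ vstar)
    (Δ r : ℕ → ℝ) (hΔ : ∀ i, i < l → 0 ≤ Δ i) (hr : ∀ i, i < l → 0 ≤ r i)
    (h : ∀ i, i < l → Δ i ≥ C * (vstar - ∑ j ∈ Finset.range i, Δ j) - r i) :
    (∑ i ∈ Finset.range l, Δ i ≥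
        (1 - (1 - C) ^ l) * vstar - ∑ i ∈ Finset.range l, r i) ∧
    ((1 - (1 - C) ^ l) * vstar - ∑ i ∈ Finset.range l, r i ≥
        (1 - Real.exp (-(C * l))) * vstar - ∑ i ∈ Finset.range l, r i) := by
  refine ⟨aux0 C vstar hC0 hC1 hv Δ r l hr h, ?_⟩
  have hpow : (1 - C) ^ l ≤ Real.exp (-(C * l)) := by
    have h1 : 1 - C ≤ Real.exp (-C) := by
      have := Real.add_one_le_exp (-C); linarith
    calc (1 - C) ^ l ≤ Real.exp (-C) ^ l :=
          pow_le_pow_left₀ (by linarith) h1 l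
      _ = Real.exp (-(C * l)) := by
          rw [← Real.exp_nat_mul]; ring_nf
  have := mul_le_mul_of_nonneg_right (by linarith : 1 - Real.exp (-(C*l)) ≤ 1 - (1-C)^l) hv
  linarith
end

section
/- For every positive integer k and every positive integer T with T ≥ k² and k dividing T, there exist a ground set V of 2k atoms and T-tuples (Z_1, …, Z_T), (Z*_1, …, Z*_T) of subsets of V, each with total size at most T (Σ_t |Z_t| ≤ T and Σ_t |Z*_t| ≤ T) and each using at most k distinct atoms, such that no list of at most 2k − 2 feasible replacements of (Z_1, …, Z_T) with respect to the family I = {(Y_1, …, Y_T) : Σ_{t=1}^T |Y_t| ≤ T} covers (Z*_1, …, Z*_T). Hence the replacement sparsity parameter of the average sparsity constraint without individual sparsity is at least 2k − 1. (Such tuples are given by Z_t = {v_1, …, v_k} for 1 ≤ t ≤ T/k and Z_t = ∅ otherwise, Z*_t = {v_{k+1}} for 1 ≤ t ≤ T − k + 1 and Z*_{T−k+i} = {v_{k+i}} for i = 2, …, k, where V = {v_1, …, v_{2k}}.) -/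
/-- `Z'` is a replacement of the `T`-tuple `Z` with respect to atom `a`:
for every `t`, `Z' t \ Z t ⊆ {a}` and at most one element is removed from `Z t`. -/
def IsReplacement {V : Type*} [DecidableEq V] {T : ℕ}
    (Z Z' : Fin T → Finset V) (a : V) : Prop :=
  ∀ t, Z' t \ Z t ⊆ {a} ∧ (Z t \ Z' t).card ≤ 1

/-- The list `W` of `p` tuples is a list of feasible replacements of `Z`
(with respect to the family `I`) that covers `Z*`: each `W r` is a replacement of `Z`
with respect to some atom and belongs to `I`; each element of `Z* t \ Z t` is added in
at least one replacement; each element of `Z t \ Z* t` is removed in at most one. -/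
def CoversList {V : Type*} [DecidableEq V] {T p : ℕ}
    (I : Set (Fin T → Finset V)) (Z Zstar : Fin T → Finset V)
    (W : Fin p → Fin T → Finset V) : Prop :=
  (∀ r, (∃ a : V, IsReplacement Z (W r) a) ∧ W r ∈ I) ∧
  (∀ t : Fin T, ∀ x ∈ Zstar t \ Z t, ∃ r, x ∈ W r t \ Z t) ∧
  (∀ t : Fin T, ∀ x ∈ Z t \ Zstar t, ∀ r r' : Fin p,
      x ∈ Z t \ W r t → x ∈ Z t \ W r' t → r = r')

lemma card_filter_lt_fin (n c : ℕ) (h : c ≤ n) :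
    (Finset.univ.filter (fun t : Fin n => t.val < c)).card = c := by
  have he : (Finset.univ.filter (fun t : Fin n => t.val < c))
      = Finset.univ.image (Fin.castLE h) := by
    ext x
    simp only [Finset.mem_filter, Finset.mem_univ, true_and, Finset.mem_image]
    constructor
    · intro hx; exact ⟨⟨x.val, hx⟩, rfl⟩
    · rintro ⟨y, rfl⟩; exact y.isLt
  rw [he, Finset.card_image_of_injective _ (Fin.castLE_injective h),
    Finset.card_univ, Fintype.card_fin]

/-- the replacement sparsity parameter of the average sparsity constraint
without individual sparsity is at least `2k - 1`: there are tuples of total size at most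
`T`, each using at most `k` distinct atoms from a ground set of `2k` atoms, such that no
list of at most `2k - 2` feasible replacements covers. -/
theorem stmt4 (k T : ℕ) (hk : 0 < k) (hT : k ^ 2 ≤ T) (hdvd : k ∣ T) :
    ∃ Z Zstar : Fin T → Finset (Fin (2 * k)),
      (∑ t, (Z t).card ≤ T) ∧ (∑ t, (Zstar t).card ≤ T) ∧
      (Finset.univ.biUnion Z).card ≤ k ∧ (Finset.univ.biUnion Zstar).card ≤ k ∧
      ∀ p : ℕ, p ≤ 2 * k - 2 → ∀ W : Fin p → Fin T → Finset (Fin (2 * k)),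
        ¬ CoversList {Y : Fin T → Finset (Fin (2 * k)) | ∑ t, (Y t).card ≤ T}
            Z Zstar W := by
  have hk1T : k ≤ T := le_trans (by nlinarith) hT
  set m := T / k with hmdef
  have hm : m * k = T := Nat.div_mul_cancel hdvd
  have hmk : k ≤ m := (Nat.le_div_iff_mul_le hk).mpr (by nlinarith)
  have hmT : m ≤ T := Nat.div_le_self T k
  -- atoms
  let a : Fin k → Fin (2 * k) := fun j => ⟨k + j.val, by have := j.isLt; omega⟩
  have ha_inj : Function.Injective a := by
    intro i j h
    have : k + i.val = k + j.val := congrArg Fin.val h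
    exact Fin.ext (by omega)
  let Z : Fin T → Finset (Fin (2 * k)) :=
    fun t => if t.val < m then Finset.univ.filter (fun x : Fin (2 * k) => x.val < k) else ∅
  let Zstar : Fin T → Finset (Fin (2 * k)) :=
    fun t => {a ⟨t.val - (T - k), by have := t.isLt; omega⟩}
  have hZmem : ∀ t x, x ∈ Z t → x.val < k := by
    intro t x hx
    by_cases ht : t.val < m
    · simp only [Z, if_pos ht, Finset.mem_filter] at hx
      exact hx.2
    · simp [Z, if_neg ht] at hx
  have hanZ : ∀ j t, a j ∉ Z t := by
    intro j t h
    have := hZmem t _ h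
    simp only [a] at this
    omega
  have hZcard : ∀ t : Fin T, (Z t).card = if t.val < m then k else 0 := by
    intro t
    by_cases ht : t.val < m
    · simp only [Z, if_pos ht]
      exact card_filter_lt_fin (2 * k) k (by omega)
    · simp [Z, if_neg ht]
  have hZsum : ∑ t, (Z t).card = T := by
    calc ∑ t, (Z t).card = ∑ t : Fin T, (if t.val < m then k else 0) := by
          exact Finset.sum_congr rfl (fun t _ => hZcard t)
      _ = ∑ t ∈ Finset.univ.filter (fun t : Fin T => t.val < m), k := by
          rw [Finset.sum_filter]
      _ = m * k := by
          rw [Finset.sum_const, card_filter_lt_fin T m hmT, smul_eq_mul]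
      _ = T := hm
  have hZstarcard : ∀ t : Fin T, (Zstar t).card = 1 := fun t => Finset.card_singleton _
  refine ⟨Z, Zstar, le_of_eq hZsum, ?_, ?_, ?_, ?_⟩
  · calc ∑ t, (Zstar t).card = ∑ t : Fin T, 1 :=
          Finset.sum_congr rfl (fun t _ => hZstarcard t)
      _ = T := by simp
      _ ≤ T := le_rfl
  · -- biUnion Z card ≤ k
    have hsub : Finset.univ.biUnion Z ⊆
        Finset.univ.filter (fun x : Fin (2 * k) => x.val < k) := by
      intro x hx
      obtain ⟨t, -, hxt⟩ := Finset.mem_biUnion.mp hx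
      exact Finset.mem_filter.mpr ⟨Finset.mem_univ _, hZmem t x hxt⟩
    calc (Finset.univ.biUnion Z).card ≤ _ := Finset.card_le_card hsub
      _ = k := card_filter_lt_fin (2 * k) k (by omega)
  · -- biUnion Zstar card ≤ k
    have hsub : Finset.univ.biUnion Zstar ⊆ Finset.univ.image a := by
      intro x hx
      obtain ⟨t, -, hxt⟩ := Finset.mem_biUnion.mp hx
      rw [Finset.mem_singleton.mp hxt]
      exact Finset.mem_image_of_mem _ (Finset.mem_univ _)
    calc (Finset.univ.biUnion Zstar).card ≤ (Finset.univ.image a).card :=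
          Finset.card_le_card hsub
      _ ≤ (Finset.univ : Finset (Fin k)).card := Finset.card_image_le
      _ = k := by simp
  · -- main part
    intro p hp W hcov
    obtain ⟨h1, h2, -⟩ := hcov
    -- each replacement adds its atom at most m times
    have hB : ∀ r (j : Fin k),
        (Finset.univ.filter (fun t : Fin T => a j ∈ W r t)).card ≤ m := by
      intro r j
      obtain ⟨⟨b, hb⟩, hWI⟩ := h1 r
      have hWsum : ∑ t, (W r t).card ≤ T := hWI
      have key : ∀ t : Fin T, (Z t).card + (if a j ∈ W r t then 1 else 0)
          ≤ (W r t).card + (if (Z t \ W r t).Nonempty then 1 else 0) := by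
        intro t
        have h5 : (Z t \ W r t).card ≤ 1 := (hb t).2
        have h6 : (Z t ∩ W r t).card + (Z t \ W r t).card = (Z t).card :=
          Finset.card_inter_add_card_sdiff _ _
        have h7 : (Z t ∩ W r t).card ≤ (W r t).card :=
          Finset.card_le_card Finset.inter_subset_right
        by_cases hjw : a j ∈ W r t
        · have hsub : insert (a j) (Z t ∩ W r t) ⊆ W r t := by
            intro x hx
            rcases Finset.mem_insert.mp hx with rfl | hx
            · exact hjw
            · exact (Finset.mem_inter.mp hx).2
          have hcard : (insert (a j) (Z t ∩ W r t)).card = (Z t ∩ W r t).card + 1 :=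
            Finset.card_insert_of_notMem (fun h => hanZ j t (Finset.mem_inter.mp h).1)
          have h8 := Finset.card_le_card hsub
          rw [hcard] at h8
          by_cases hne : (Z t \ W r t).Nonempty
          · have h9 : 1 ≤ (Z t \ W r t).card := Finset.card_pos.mpr hne
            simp only [if_pos hjw, if_pos hne]
            omega
          · have h9 : (Z t \ W r t).card = 0 := by
              simp [Finset.not_nonempty_iff_eq_empty.mp hne]
            simp only [if_pos hjw, if_neg hne]
            omega
        · by_cases hne : (Z t \ W r t).Nonempty
          · simp only [if_neg hjw, if_pos hne]
            omega
          · have h9 : (Z t \ W r t).card = 0 := by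
              simp [Finset.not_nonempty_iff_eq_empty.mp hne]
            simp only [if_neg hjw, if_neg hne]
            omega
      have hsum := Finset.sum_le_sum (fun t (_ : t ∈ Finset.univ) => key t)
      rw [Finset.sum_add_distrib, Finset.sum_add_distrib] at hsum
      have e1 : ∑ t : Fin T, (if a j ∈ W r t then 1 else 0)
          = (Finset.univ.filter (fun t : Fin T => a j ∈ W r t)).card :=
        (Finset.card_filter _ _).symm
      have e2 : ∑ t : Fin T, (if (Z t \ W r t).Nonempty then 1 else 0)
          = (Finset.univ.filter (fun t : Fin T => (Z t \ W r t).Nonempty)).card :=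
        (Finset.card_filter _ _).symm
      have hR : (Finset.univ.filter (fun t : Fin T => (Z t \ W r t).Nonempty)).card ≤ m := by
        have hsub : (Finset.univ.filter (fun t : Fin T => (Z t \ W r t).Nonempty))
            ⊆ Finset.univ.filter (fun t : Fin T => t.val < m) := by
          intro t ht
          obtain ⟨x, hx⟩ := (Finset.mem_filter.mp ht).2
          have hxZ : x ∈ Z t := (Finset.mem_sdiff.mp hx).1
          refine Finset.mem_filter.mpr ⟨Finset.mem_univ _, ?_⟩
          by_contra hlt
          simp [Z, if_neg hlt] at hxZ
        calc _ ≤ _ := Finset.card_le_card hsub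
          _ = m := card_filter_lt_fin T m hmT
      rw [e1, e2, hZsum] at hsum
      omega
    -- a replacement can add only one atom
    have hwitness : ∀ r (j j' : Fin k) (t t' : Fin T),
        a j ∈ W r t → a j' ∈ W r t' → j = j' := by
      intro r j j' t t' hj hj'
      obtain ⟨⟨b, hb⟩, -⟩ := h1 r
      have e1 : a j = b := Finset.mem_singleton.mp
        ((hb t).1 (Finset.mem_sdiff.mpr ⟨hj, hanZ j t⟩))
      have e2 : a j' = b := Finset.mem_singleton.mp
        ((hb t').1 (Finset.mem_sdiff.mpr ⟨hj', hanZ j' t'⟩))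
      exact ha_inj (e1.trans e2.symm)
    set P : Fin k → Finset (Fin p) :=
      fun j => Finset.univ.filter (fun r => ∃ t, a j ∈ W r t) with hPdef
    have hPdisj : ∀ j ∈ (Finset.univ : Finset (Fin k)), ∀ j' ∈ (Finset.univ : Finset (Fin k)),
        j ≠ j' → Disjoint (P j) (P j') := by
      intro j _ j' _ hne
      rw [Finset.disjoint_left]
      intro r hr hr'
      obtain ⟨t, ht⟩ := (Finset.mem_filter.mp hr).2
      obtain ⟨t', ht'⟩ := (Finset.mem_filter.mp hr').2
      exact hne (hwitness r j j' t t' ht ht')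
    have j0 : Fin k := ⟨0, hk⟩
    -- every atom class is hit at least once
    have hPj : ∀ j : Fin k, 1 ≤ (P j).card := by
      intro j
      have htj : T - k + j.val < T := by have := j.isLt; omega
      set tj : Fin T := ⟨T - k + j.val, htj⟩ with htjdef
      have hz : Zstar tj = {a j} := by
        simp only [Zstar]
        congr 1
        apply congrArg
        exact Fin.ext (by simp [tj])
      have hmem : a j ∈ Zstar tj \ Z tj :=
        Finset.mem_sdiff.mpr ⟨by rw [hz]; exact Finset.mem_singleton_self _, hanZ j tj⟩
      obtain ⟨r, hr⟩ := h2 tj _ hmem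
      have : r ∈ P j := Finset.mem_filter.mpr
        ⟨Finset.mem_univ _, ⟨tj, (Finset.mem_sdiff.mp hr).1⟩⟩
      exact Finset.card_pos.mpr ⟨r, this⟩
    -- the class of atom 0 has at least k members
    have hP0 : k ≤ (P ⟨0, hk⟩).card := by
      have hcover : (Finset.univ.filter (fun t : Fin T => t.val < T - k + 1))
          ⊆ (P ⟨0, hk⟩).biUnion
            (fun r => Finset.univ.filter (fun t : Fin T => a ⟨0, hk⟩ ∈ W r t)) := by
        intro t ht
        have htv : t.val ≤ T - k := by
          have := (Finset.mem_filter.mp ht).2; omega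
        have hz : Zstar t = {a ⟨0, hk⟩} := by
          simp only [Zstar]
          congr 1
          apply congrArg
          exact Fin.ext (by simp only [Fin.val_mk]; omega)
        have hmem : a ⟨0, hk⟩ ∈ Zstar t \ Z t :=
          Finset.mem_sdiff.mpr ⟨by rw [hz]; exact Finset.mem_singleton_self _, hanZ _ t⟩
        obtain ⟨r, hr⟩ := h2 t _ hmem
        have hrW : a ⟨0, hk⟩ ∈ W r t := (Finset.mem_sdiff.mp hr).1
        exact Finset.mem_biUnion.mpr
          ⟨r, Finset.mem_filter.mpr ⟨Finset.mem_univ _, ⟨t, hrW⟩⟩,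
            Finset.mem_filter.mpr ⟨Finset.mem_univ _, hrW⟩⟩
      have hc1 : T - k + 1 ≤ (P ⟨0, hk⟩).card * m := by
        calc T - k + 1
            = (Finset.univ.filter (fun t : Fin T => t.val < T - k + 1)).card :=
              (card_filter_lt_fin T (T - k + 1) (by omega)).symm
          _ ≤ ((P ⟨0, hk⟩).biUnion
                (fun r => Finset.univ.filter (fun t : Fin T => a ⟨0, hk⟩ ∈ W r t))).card :=
              Finset.card_le_card hcover
          _ ≤ ∑ r ∈ P ⟨0, hk⟩,
                (Finset.univ.filter (fun t : Fin T => a ⟨0, hk⟩ ∈ W r t)).card :=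
              Finset.card_biUnion_le
          _ ≤ ∑ _r ∈ P ⟨0, hk⟩, m :=
              Finset.sum_le_sum (fun r _ => hB r ⟨0, hk⟩)
          _ = (P ⟨0, hk⟩).card * m := by rw [Finset.sum_const, smul_eq_mul]
      by_contra hlt
      push_neg at hlt
      have h9 : (P ⟨0, hk⟩).card * m ≤ (k - 1) * m :=
        Nat.mul_le_mul_right m (by omega)
      have h10 : (k - 1) * m = k * m - m := Nat.sub_one_mul k m
      have h11 : k * m = T := by rw [mul_comm]; exact hm
      omega
    -- final counting
    have hsum : ∑ j : Fin k, (P j).card = (Finset.univ.biUnion P).card :=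
      (Finset.card_biUnion hPdisj).symm
    have h11 : (Finset.univ.biUnion P).card ≤ p := by
      calc (Finset.univ.biUnion P).card ≤ (Finset.univ : Finset (Fin p)).card :=
            Finset.card_le_card (Finset.subset_univ _)
        _ = p := by simp
    have h12 : k + (k - 1) ≤ ∑ j : Fin k, (P j).card := by
      rw [← Finset.add_sum_erase _ _ (Finset.mem_univ (⟨0, hk⟩ : Fin k))]
      have hrest : (Finset.univ.erase (⟨0, hk⟩ : Fin k)).card
          ≤ ∑ j ∈ Finset.univ.erase (⟨0, hk⟩ : Fin k), (P j).card := by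
        calc (Finset.univ.erase (⟨0, hk⟩ : Fin k)).card
            = ∑ _j ∈ Finset.univ.erase (⟨0, hk⟩ : Fin k), 1 := by
              rw [Finset.sum_const, smul_eq_mul, mul_one]
          _ ≤ _ := Finset.sum_le_sum (fun j _ => hPj j)
      have hec : (Finset.univ.erase (⟨0, hk⟩ : Fin k)).card = k - 1 := by
        rw [Finset.card_erase_of_mem (Finset.mem_univ _), Finset.card_univ, Fintype.card_fin]
      omega
    omega
end

section
/- Let s be a positive integer and M > 0, and suppose u is M-smooth on Ω_{s,2}. Let Z, Z' ⊆ V with |Z| ≤ s, |Z'| ≤ s and |Z △ Z'| ≤ 2 (symmetric difference of size at most 2). Then f(Z') − f(Z) ≥ (1/(2M))·‖(∇u(w^{(Z)}))_{Z' \ Z}‖² − (M/2)·‖(w^{(Z)})_{Z \ Z'}‖². -/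
open scoped RealInnerProductSpace

/-- The support of a vector, as a finset. -/
noncomputable def suppF {V : Type*} [Fintype V] [DecidableEq V]
    (w : EuclideanSpace ℝ V) : Finset V :=
  Finset.univ.filter fun a => w a ≠ 0

/-- The restriction `w_S` of a vector `w` to a set `S` of coordinates:
it agrees with `w` on `S` and is zero elsewhere. -/
noncomputable def restr {V : Type*} [Fintype V] [DecidableEq V]
    (w : EuclideanSpace ℝ V) (S : Finset V) : EuclideanSpace ℝ V :=
  WithLp.toLp 2 (fun a => if a ∈ S then w a else 0)

lemma suppF_sub {V : Type*} [Fintype V] [DecidableEq V]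
    {w : EuclideanSpace ℝ V} {S : Finset V} (h : ∀ a, a ∉ S → w a = 0) :
    suppF w ⊆ S := by
  intro a ha
  simp only [suppF, Finset.mem_filter] at ha
  by_contra hc
  exact ha.2 (h a hc)

/-- if `u` is `M`-smooth on `Ω_{s,2}` then for `|Z|, |Z'| ≤ s` with
`|Z △ Z'| ≤ 2`, `f(Z') - f(Z) ≥ (1/(2M))‖(∇u(w^{(Z)}))_{Z' \ Z}‖² - (M/2)‖(w^{(Z)})_{Z \ Z'}‖²`. -/
theorem stmt6 {V : Type*} [Fintype V] [DecidableEq V]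
    (s : ℕ) (hs : 0 < s) (M : ℝ) (hM : 0 < M)
    (u : EuclideanSpace ℝ V → ℝ) (hu : Differentiable ℝ u)
    (hsmooth : ∀ x y : EuclideanSpace ℝ V,
      (suppF x).card ≤ s → (suppF y).card ≤ s → (suppF (x - y)).card ≤ 2 →
      u y - u x - ⟪gradient u x, y - x⟫ ≥ -(M / 2) * ‖y - x‖ ^ 2)
    (w : Finset V → EuclideanSpace ℝ V)
    (hw_supp : ∀ Z : Finset V, suppF (w Z) ⊆ Z)
    (hw_max : ∀ Z : Finset V, ∀ z : EuclideanSpace ℝ V, suppF z ⊆ Z → u z ≤ u (w Z))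
    (hw_grad : ∀ Z : Finset V, ∀ a ∈ Z, gradient u (w Z) a = 0)
    (Z Z' : Finset V) (hZ : Z.card ≤ s) (hZ' : Z'.card ≤ s)
    (hsym : ((Z \ Z') ∪ (Z' \ Z)).card ≤ 2) :
    (u (w Z') - u 0) - (u (w Z) - u 0) ≥
      (1 / (2 * M)) * ‖restr (gradient u (w Z)) (Z' \ Z)‖ ^ 2
        - (M / 2) * ‖restr (w Z) (Z \ Z')‖ ^ 2 := by
  set g : EuclideanSpace ℝ V := gradient u (w Z) with hg
  set rg : EuclideanSpace ℝ V := restr g (Z' \ Z) with hrg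
  set rw : EuclideanSpace ℝ V := restr (w Z) (Z \ Z') with hrw
  -- w Z vanishes off Z
  have hwz : ∀ a, a ∉ Z → w Z a = 0 := by
    intro a ha
    by_contra hc
    exact ha (hw_supp Z (by simp [suppF, hc]))
  set y : EuclideanSpace ℝ V := restr (w Z) (Z ∩ Z') + M⁻¹ • rg with hy
  have hy_apply : ∀ a, y a = (if a ∈ Z ∩ Z' then w Z a else 0)
      + M⁻¹ * (if a ∈ Z' \ Z then g a else 0) := by
    intro a; rfl
  have hy_supp : suppF y ⊆ Z' := by
    apply suppF_sub
    intro a ha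
    rw [hy_apply]
    rw [if_neg (by simp [ha]), if_neg (by simp [ha])]
    ring
  -- the difference
  have hdiff : y - w Z = M⁻¹ • rg - rw := by
    ext a
    have h1 : (y - w Z) a = y a - w Z a := rfl
    have h2 : (M⁻¹ • rg - rw) a = M⁻¹ * (if a ∈ Z' \ Z then g a else 0)
        - (if a ∈ Z \ Z' then w Z a else 0) := rfl
    rw [h1, h2, hy_apply]
    by_cases haZ : a ∈ Z <;> by_cases haZ' : a ∈ Z' <;>
      simp [haZ, haZ', hwz a, Finset.mem_inter, Finset.mem_sdiff]
  have hdsupp : suppF (w Z - y) ⊆ (Z \ Z') ∪ (Z' \ Z) := by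
    apply suppF_sub
    intro a ha
    simp only [Finset.mem_union, Finset.mem_sdiff, not_or, not_and, not_not] at ha
    have : (w Z - y) a = w Z a - y a := rfl
    rw [this, hy_apply]
    by_cases haZ : a ∈ Z
    · have haZ' : a ∈ Z' := ha.1 haZ
      simp [Finset.mem_inter, Finset.mem_sdiff, haZ, haZ']
    · have haZ' : a ∉ Z' := fun h => haZ (ha.2 h)
      simp [Finset.mem_inter, Finset.mem_sdiff, haZ, haZ', hwz a haZ]
  -- inner product facts
  have hinner_sum : ∀ p q : EuclideanSpace ℝ V, ⟪p, q⟫ = ∑ a, p a * q a := by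
    intro p q
    simp [PiLp.inner_apply, RCLike.inner_apply, mul_comm]
  have hgrg : ⟪g, rg⟫ = ‖rg‖ ^ 2 := by
    rw [← real_inner_self_eq_norm_sq, hinner_sum, hinner_sum]
    apply Finset.sum_congr rfl
    intro a _
    by_cases h : a ∈ Z' \ Z <;> simp +contextual [hrg, restr, h]
  have hgrw : ⟪g, rw⟫ = 0 := by
    rw [hinner_sum]
    apply Finset.sum_eq_zero
    intro a _
    by_cases h : a ∈ Z \ Z'
    · have : g a = 0 := hw_grad Z a (Finset.mem_sdiff.mp h).1
      simp [this]
    · simp [hrw, restr, h]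
      intro h1 h2; exact absurd (Finset.mem_sdiff.mpr ⟨h1, h2⟩) h
  have hrgrw : ⟪rg, rw⟫ = 0 := by
    rw [hinner_sum]
    apply Finset.sum_eq_zero
    intro a _
    by_cases h : a ∈ Z' \ Z
    · have : a ∉ Z \ Z' := by
        simp only [Finset.mem_sdiff] at h ⊢; tauto
      simp +contextual [hrw, restr, this, (Finset.mem_sdiff.mp h).2]
    · simp [hrg, restr, h]
      intro h1 h2; exact absurd (Finset.mem_sdiff.mpr ⟨h1, h2⟩) h
  -- norm of difference
  have hnd : ‖y - w Z‖ ^ 2 = M⁻¹ ^ 2 * ‖rg‖ ^ 2 + ‖rw‖ ^ 2 := by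
    rw [hdiff, norm_sub_sq_real, real_inner_smul_left, hrgrw, norm_smul]
    have : ‖M⁻¹‖ = M⁻¹ := by
      rw [Real.norm_eq_abs, abs_of_pos (by positivity)]
    rw [this]; ring
  -- inner of gradient with difference
  have hginner : ⟪g, y - w Z⟫ = M⁻¹ * ‖rg‖ ^ 2 := by
    rw [hdiff, inner_sub_right, real_inner_smul_right, hgrg, hgrw]; ring
  -- apply smoothness
  have hcard1 : (suppF (w Z)).card ≤ s :=
    le_trans (Finset.card_le_card (hw_supp Z)) hZ
  have hcard2 : (suppF y).card ≤ s :=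
    le_trans (Finset.card_le_card hy_supp) hZ'
  have hcard3 : (suppF (w Z - y)).card ≤ 2 :=
    le_trans (Finset.card_le_card hdsupp) hsym
  have hsm := hsmooth (w Z) y hcard1 hcard2 hcard3
  rw [← hg, hginner, hnd] at hsm
  have hmax : u y ≤ u (w Z') := hw_max Z' y hy_supp
  have hG : (0:ℝ) ≤ ‖rg‖ ^ 2 := by positivity
  have hW : (0:ℝ) ≤ ‖rw‖ ^ 2 := by positivity
  have key : (1 / (2 * M)) * ‖rg‖ ^ 2 - (M / 2) * ‖rw‖ ^ 2 ≤ u y - u (w Z) := by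
    have h2 : M⁻¹ * ‖rg‖ ^ 2 - (M / 2) * (M⁻¹ ^ 2 * ‖rg‖ ^ 2 + ‖rw‖ ^ 2)
        = (1 / (2 * M)) * ‖rg‖ ^ 2 - (M / 2) * ‖rw‖ ^ 2 := by
      field_simp
      ring
    nlinarith [hsm]
  linarith
end

section
/- Let s be a positive integer and m > 0, and suppose u is m-strongly concave on Ω_{2s}. Let Z ⊆ V with |Z| ≤ s. Then f(Z) ≥ (m/2)·‖w^{(Z)}‖², and consequently f(Z) ≥ (m/2)·‖(w^{(Z)})_S‖² for every S ⊆ V. -/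
open scoped RealInnerProductSpace

/-- if `u` is `m`-strongly concave on `Ω_{2s}` then for `|Z| ≤ s`,
`f(Z) ≥ (m/2)‖w^{(Z)}‖²`, and consequently `f(Z) ≥ (m/2)‖(w^{(Z)})_S‖²` for every `S`. -/
theorem stmt8 {V : Type*} [Fintype V] [DecidableEq V]
    (s : ℕ) (hs : 0 < s) (m : ℝ) (hm : 0 < m)
    (u : EuclideanSpace ℝ V → ℝ) (hu : Differentiable ℝ u)
    (hconc : ∀ x y : EuclideanSpace ℝ V,
      (suppF x).card ≤ 2 * s → (suppF y).card ≤ 2 * s → (suppF (x - y)).card ≤ 2 * s →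
      u y - u x - ⟪gradient u x, y - x⟫ ≤ -(m / 2) * ‖y - x‖ ^ 2)
    (w : Finset V → EuclideanSpace ℝ V)
    (hw_supp : ∀ Z : Finset V, suppF (w Z) ⊆ Z)
    (hw_max : ∀ Z : Finset V, ∀ z : EuclideanSpace ℝ V, suppF z ⊆ Z → u z ≤ u (w Z))
    (hw_grad : ∀ Z : Finset V, ∀ a ∈ Z, gradient u (w Z) a = 0)
    (Z : Finset V) (hZ : Z.card ≤ s) :
    (u (w Z) - u 0 ≥ (m / 2) * ‖w Z‖ ^ 2) ∧
      (∀ S : Finset V, u (w Z) - u 0 ≥ (m / 2) * ‖restr (w Z) S‖ ^ 2) := by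
  have hwZ_zero : ∀ a : V, a ∉ Z → w Z a = 0 := by
    intro a ha
    by_contra h
    exact ha (hw_supp Z (by simp [suppF, h]))
  have hcard : (suppF (w Z)).card ≤ 2 * s :=
    le_trans (Finset.card_le_card (hw_supp Z)) (by omega)
  have h0 : suppF (0 : EuclideanSpace ℝ V) = ∅ := by
    simp [suppF]

  have hsub : (suppF (w Z - 0)).card ≤ 2 * s := by
    rw [sub_zero]; exact hcard
  have hinner : ⟪gradient u (w Z), (0 : EuclideanSpace ℝ V) - w Z⟫ = 0 := by
    rw [PiLp.inner_apply]
    apply Finset.sum_eq_zero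
    intro a _
    by_cases ha : a ∈ Z
    · simp [hw_grad Z a ha]
    · simp [hwZ_zero a ha]
  have key := hconc (w Z) 0 hcard (by rw [h0]; simp) hsub
  rw [hinner, zero_sub, norm_neg] at key
  have h1 : u (w Z) - u 0 ≥ (m / 2) * ‖w Z‖ ^ 2 := by linarith
  refine ⟨h1, fun S => ?_⟩
  have hle : ‖restr (w Z) S‖ ^ 2 ≤ ‖w Z‖ ^ 2 := by
    rw [EuclideanSpace.norm_eq, EuclideanSpace.norm_eq,
      Real.sq_sqrt (by positivity), Real.sq_sqrt (by positivity)]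
    apply Finset.sum_le_sum
    intro a _
    by_cases ha : a ∈ S <;> simp [restr, ha] <;> positivity
  have := mul_le_mul_of_nonneg_left hle (by positivity : (0:ℝ) ≤ m / 2)
  linarith
end

section
/- (Surrogate sandwich for modular approximation.) Let s be a positive integer and 0 < m_1 ≤ M_1, 0 < m_s ≤ M_s. Suppose u is m_1-strongly concave and M_1-smooth on Ω_1, and m_s-strongly concave and M_s-smooth on Ω_s. Define f̃(Z) := Σ_{a ∈ Z} f({a}) for Z ⊆ V, g(X) := max_{Z ⊆ X, |Z| ≤ s} f(Z), and g̃(X) := max_{Z ⊆ X, |Z| ≤ s} f̃(Z). Then for every X ⊆ V: (m_1/M_s)·g̃(X) ≤ g(X) ≤ (M_1/m_s)·g̃(X). -/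
open scoped RealInnerProductSpace

/-- `gmax f s X = max_{Z ⊆ X, |Z| ≤ s} f Z` (the maximum is over a nonempty finite
collection since `Z = ∅` is always allowed). -/
noncomputable def gmax {V : Type*} [DecidableEq V] (f : Finset V → ℝ) (s : ℕ)
    (X : Finset V) : ℝ :=
  (X.powerset.filter fun Z => Z.card ≤ s).sup'
    ⟨∅, Finset.mem_filter.mpr ⟨Finset.empty_mem_powerset X, by simp⟩⟩ f

lemma suppF_zero {V : Type*} [Fintype V] [DecidableEq V] :
    suppF (0 : EuclideanSpace ℝ V) = ∅ := by simp [suppF]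

lemma suppF_neg {V : Type*} [Fintype V] [DecidableEq V] (x : EuclideanSpace ℝ V) :
    suppF (-x) = suppF x := by simp [suppF]

lemma not_mem_suppF {V : Type*} [Fintype V] [DecidableEq V] {x : EuclideanSpace ℝ V}
    {a : V} (h : a ∉ suppF x) : x a = 0 := by
  by_contra hc; exact h (Finset.mem_filter.mpr ⟨Finset.mem_univ a, hc⟩)

lemma inner_eq {V : Type*} [Fintype V] (x y : EuclideanSpace ℝ V) :
    ⟪x, y⟫ = ∑ a, x a * y a := by
  simp [PiLp.inner_apply, RCLike.inner_apply, conj_trivial]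
  exact Finset.sum_congr rfl (fun _ _ => mul_comm _ _)

lemma normsq_eq {V : Type*} [Fintype V] (y : EuclideanSpace ℝ V) :
    ‖y‖ ^ 2 = ∑ a, y a ^ 2 := by
  rw [← real_inner_self_eq_norm_sq]
  simp only [inner_eq, sq]

/-- Upper bound `f(Z) ≤ ‖∇u(0)_Z‖²/(2m)` from strong concavity. -/
lemma aux_upper {V : Type*} [Fintype V] [DecidableEq V] (m : ℝ) (hm : 0 < m) (k : ℕ)
    (u : EuclideanSpace ℝ V → ℝ)
    (hconc : ∀ x y : EuclideanSpace ℝ V,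
      (suppF x).card ≤ k → (suppF y).card ≤ k → (suppF (x - y)).card ≤ k →
      u y - u x - ⟪gradient u x, y - x⟫ ≤ -(m / 2) * ‖y - x‖ ^ 2)
    (Z : Finset V) (hZ : Z.card ≤ k)
    (wZ : EuclideanSpace ℝ V) (hwZ : suppF wZ ⊆ Z) :
    u wZ - u 0 ≤ (∑ a ∈ Z, (gradient u 0 a) ^ 2) / (2 * m) := by
  have hcard : (suppF wZ).card ≤ k := le_trans (Finset.card_le_card hwZ) hZ
  have h := hconc 0 wZ (by simp [suppF_zero]) hcard
    (by rw [zero_sub wZ, suppF_neg]; exact hcard)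
  rw [sub_zero] at h
  set g := gradient u 0 with hg
  have hsum : ⟪g, wZ⟫ - m / 2 * ‖wZ‖ ^ 2 = ∑ a ∈ Z, (g a * wZ a - m / 2 * wZ a ^ 2) := by
    rw [inner_eq, normsq_eq, Finset.mul_sum, ← Finset.sum_sub_distrib]
    rw [← Finset.sum_subset (Finset.subset_univ Z)]
    intro a _ ha
    have : wZ a = 0 := not_mem_suppF (fun hc => ha (hwZ hc))
    simp [this]
  have hterm : ∀ a ∈ Z, g a * wZ a - m / 2 * wZ a ^ 2 ≤ g a ^ 2 / (2 * m) := by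
    intro a _
    rw [le_div_iff₀ (by positivity : (0:ℝ) < 2 * m)]
    nlinarith [sq_nonneg (g a - m * wZ a)]
  calc u wZ - u 0 ≤ ⟪g, wZ⟫ - m / 2 * ‖wZ‖ ^ 2 := by nlinarith [h]
    _ = ∑ a ∈ Z, (g a * wZ a - m / 2 * wZ a ^ 2) := hsum
    _ ≤ ∑ a ∈ Z, g a ^ 2 / (2 * m) := Finset.sum_le_sum hterm
    _ = (∑ a ∈ Z, g a ^ 2) / (2 * m) := by rw [Finset.sum_div]

/-- Lower bound `f(Z) ≥ ‖∇u(0)_Z‖²/(2M)` from smoothness. -/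
lemma aux_lower {V : Type*} [Fintype V] [DecidableEq V] (M : ℝ) (hM : 0 < M) (k : ℕ)
    (u : EuclideanSpace ℝ V → ℝ)
    (hsmooth : ∀ x y : EuclideanSpace ℝ V,
      (suppF x).card ≤ k → (suppF y).card ≤ k → (suppF (x - y)).card ≤ k →
      u y - u x - ⟪gradient u x, y - x⟫ ≥ -(M / 2) * ‖y - x‖ ^ 2)
    (Z : Finset V) (hZ : Z.card ≤ k)
    (wZ : EuclideanSpace ℝ V) (hwZmax : ∀ z, suppF z ⊆ Z → u z ≤ u wZ) :
    (∑ a ∈ Z, (gradient u 0 a) ^ 2) / (2 * M) ≤ u wZ - u 0 := by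
  set g := gradient u 0 with hg
  set y : EuclideanSpace ℝ V := WithLp.toLp 2 (fun a => if a ∈ Z then g a / M else 0) with hy
  have hysupp : suppF y ⊆ Z := by
    intro a ha
    have := (Finset.mem_filter.mp ha).2
    by_contra hc
    exact this (by simp [hy, hc])
  have hcard : (suppF y).card ≤ k := le_trans (Finset.card_le_card hysupp) hZ
  have h := hsmooth 0 y (by simp [suppF_zero]) hcard
    (by rw [zero_sub y, suppF_neg]; exact hcard)
  rw [sub_zero] at h
  have hinner : ⟪g, y⟫ = (∑ a ∈ Z, g a ^ 2) / M := by
    rw [inner_eq, ← Finset.sum_subset (Finset.subset_univ Z) (by intro a _ ha; simp [hy, ha]),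
      Finset.sum_div]
    exact Finset.sum_congr rfl (by intro a ha; simp [hy, ha]; ring)
  have hnorm : ‖y‖ ^ 2 = (∑ a ∈ Z, g a ^ 2) / M ^ 2 := by
    rw [normsq_eq, ← Finset.sum_subset (Finset.subset_univ Z) (by intro a _ ha; simp [hy, ha]),
      Finset.sum_div]
    exact Finset.sum_congr rfl (by intro a ha; simp [hy, ha, div_pow])
  have huy : (∑ a ∈ Z, g a ^ 2) / (2 * M) ≤ u y - u 0 := by
    rw [hinner, hnorm] at h
    have e1 : -(M / 2) * ((∑ a ∈ Z, g a ^ 2) / M ^ 2) = -((∑ a ∈ Z, g a ^ 2) / (2 * M)) := by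
      field_simp
    have e2 : (∑ a ∈ Z, g a ^ 2) / M = 2 * ((∑ a ∈ Z, g a ^ 2) / (2 * M)) := by
      field_simp
    rw [ge_iff_le, e1, e2] at h
    linarith
  linarith [hwZmax y hysupp]

/-- surrogate sandwich for modular approximation,
`(m₁/M_s)·g̃(X) ≤ g(X) ≤ (M₁/m_s)·g̃(X)`. -/
theorem stmt14 {V : Type*} [Fintype V] [DecidableEq V]
    (s : ℕ) (hs : 0 < s) (m1 M1 ms Ms : ℝ)
    (hm1 : 0 < m1) (hm1M1 : m1 ≤ M1) (hms : 0 < ms) (hmsMs : ms ≤ Ms)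
    (u : EuclideanSpace ℝ V → ℝ) (hu : Differentiable ℝ u)
    (hconc1 : ∀ x y : EuclideanSpace ℝ V,
      (suppF x).card ≤ 1 → (suppF y).card ≤ 1 → (suppF (x - y)).card ≤ 1 →
      u y - u x - ⟪gradient u x, y - x⟫ ≤ -(m1 / 2) * ‖y - x‖ ^ 2)
    (hsmooth1 : ∀ x y : EuclideanSpace ℝ V,
      (suppF x).card ≤ 1 → (suppF y).card ≤ 1 → (suppF (x - y)).card ≤ 1 →
      u y - u x - ⟪gradient u x, y - x⟫ ≥ -(M1 / 2) * ‖y - x‖ ^ 2)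
    (hconcs : ∀ x y : EuclideanSpace ℝ V,
      (suppF x).card ≤ s → (suppF y).card ≤ s → (suppF (x - y)).card ≤ s →
      u y - u x - ⟪gradient u x, y - x⟫ ≤ -(ms / 2) * ‖y - x‖ ^ 2)
    (hsmooths : ∀ x y : EuclideanSpace ℝ V,
      (suppF x).card ≤ s → (suppF y).card ≤ s → (suppF (x - y)).card ≤ s →
      u y - u x - ⟪gradient u x, y - x⟫ ≥ -(Ms / 2) * ‖y - x‖ ^ 2)
    (w : Finset V → EuclideanSpace ℝ V)
    (hw_supp : ∀ Z : Finset V, suppF (w Z) ⊆ Z)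
    (hw_max : ∀ Z : Finset V, ∀ z : EuclideanSpace ℝ V, suppF z ⊆ Z → u z ≤ u (w Z))
    (hw_grad : ∀ Z : Finset V, ∀ a ∈ Z, gradient u (w Z) a = 0)
    (X : Finset V) :
    (m1 / Ms) * gmax (fun Z => ∑ a ∈ Z, (u (w {a}) - u 0)) s X ≤
        gmax (fun Z => u (w Z) - u 0) s X ∧
      gmax (fun Z => u (w Z) - u 0) s X ≤
        (M1 / ms) * gmax (fun Z => ∑ a ∈ Z, (u (w {a}) - u 0)) s X := by
  
  classical
  have hMs : 0 < Ms := lt_of_lt_of_le hms hmsMs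
  have hM1 : 0 < M1 := lt_of_lt_of_le hm1 hm1M1
  set g := gradient u 0 with hg
  set T := (X.powerset.filter fun Z => Z.card ≤ s) with hT
  set F : Finset V → ℝ := fun Z => u (w Z) - u 0 with hF
  set Ft : Finset V → ℝ := fun Z => ∑ a ∈ Z, (u (w {a}) - u 0) with hFt
  have ha_hi : ∀ a : V, u (w {a}) - u 0 ≤ g a ^ 2 / (2 * m1) := by
    intro a
    have := aux_upper m1 hm1 1 u hconc1 {a} (by simp) (w {a}) (hw_supp {a})
    simpa using this
  have ha_lo : ∀ a : V, g a ^ 2 / (2 * M1) ≤ u (w {a}) - u 0 := by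
    intro a
    have := aux_lower M1 hM1 1 u hsmooth1 {a} (by simp) (w {a}) (hw_max {a})
    simpa using this
  have key1 : ∀ Z : Finset V, Z.card ≤ s → (m1 / Ms) * Ft Z ≤ F Z := by
    intro Z hZc
    have h1 : Ft Z ≤ (∑ a ∈ Z, g a ^ 2) / (2 * m1) := by
      rw [Finset.sum_div]
      exact Finset.sum_le_sum fun a _ => ha_hi a
    have h2 : (∑ a ∈ Z, g a ^ 2) / (2 * Ms) ≤ F Z :=
      aux_lower Ms hMs s u hsmooths Z hZc (w Z) (hw_max Z)
    have h3 : (m1 / Ms) * ((∑ a ∈ Z, g a ^ 2) / (2 * m1)) =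
        (∑ a ∈ Z, g a ^ 2) / (2 * Ms) := by field_simp
    calc (m1 / Ms) * Ft Z ≤ (m1 / Ms) * ((∑ a ∈ Z, g a ^ 2) / (2 * m1)) :=
          mul_le_mul_of_nonneg_left h1 (by positivity)
      _ = (∑ a ∈ Z, g a ^ 2) / (2 * Ms) := h3
      _ ≤ F Z := h2
  have key2 : ∀ Z : Finset V, Z.card ≤ s → F Z ≤ (M1 / ms) * Ft Z := by
    intro Z hZc
    have h1 : F Z ≤ (∑ a ∈ Z, g a ^ 2) / (2 * ms) :=
      aux_upper ms hms s u hconcs Z hZc (w Z) (hw_supp Z)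
    have h2 : (∑ a ∈ Z, g a ^ 2) ≤ 2 * M1 * Ft Z := by
      rw [hFt, Finset.mul_sum]
      refine Finset.sum_le_sum fun a _ => ?_
      have := ha_lo a
      rw [div_le_iff₀ (by positivity)] at this
      linarith
    calc F Z ≤ (∑ a ∈ Z, g a ^ 2) / (2 * ms) := h1
      _ ≤ (2 * M1 * Ft Z) / (2 * ms) := by gcongr
      _ = (M1 / ms) * Ft Z := by field_simp
  have hcardmem : ∀ Z ∈ T, Z.card ≤ s := fun Z hZ => (Finset.mem_filter.mp hZ).2
  have hL : ∀ (H : T.Nonempty), (m1 / Ms) * T.sup' H Ft ≤ T.sup' H F := by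
    intro H
    obtain ⟨Z0, hZ0mem, hZ0eq⟩ := Finset.exists_mem_eq_sup' H Ft
    rw [hZ0eq]
    exact le_trans (key1 Z0 (hcardmem Z0 hZ0mem)) (Finset.le_sup' F hZ0mem)
  have hR : ∀ (H : T.Nonempty), T.sup' H F ≤ (M1 / ms) * T.sup' H Ft := by
    intro H
    obtain ⟨Z1, hZ1mem, hZ1eq⟩ := Finset.exists_mem_eq_sup' H F
    rw [hZ1eq]
    exact le_trans (key2 Z1 (hcardmem Z1 hZ1mem))
      (mul_le_mul_of_nonneg_left (Finset.le_sup' Ft hZ1mem) (by positivity))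
  exact ⟨hL _, hR _⟩
end

section
/- (Per-step inequality for the online replacement gains.) Let s be a positive integer and 0 < m_{2s} ≤ M_{s,2}, and suppose u is m_{2s}-strongly concave on Ω_{2s} and M_{s,2}-smooth on Ω_{s,2}. For a ∈ V and Z ⊆ V with |Z| ≤ s, define the replacement gain Δ(a, Z) := f(Z ∪ {a}) − f(Z) if |Z| < s, and Δ(a, Z) := max{0, max_{a' ∈ Z} (f((Z \ {a'}) ∪ {a}) − f(Z))} if |Z| = s. Then for all Z, Z* ⊆ V with |Z| ≤ s and |Z*| ≤ s: Σ_{a ∈ Z*} Δ(a, Z) ≥ (m_{2s}/M_{s,2})·f(Z*) − (M_{s,2}/m_{2s})·f(Z). -/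
open scoped RealInnerProductSpace

/-- The replacement gain `Δ(a, Z)` of adding atom `a` to support `Z` under the sparsity
bound `s`: if `|Z| < s` it is `f(Z ∪ {a}) - f(Z)`, and if `|Z| = s` it is
`max {0, max_{a' ∈ Z} (f((Z \ {a'}) ∪ {a}) - f(Z))}` (junk value `0` if `Z = ∅`). -/
noncomputable def repGain {V : Type*} [Fintype V] [DecidableEq V]
    (f : Finset V → ℝ) (s : ℕ) (a : V) (Z : Finset V) : ℝ :=
  if Z.card < s then f (insert a Z) - f Z
  else if hZ : Z.Nonempty then
    max 0 (Z.sup' hZ fun a' => f (insert a (Z.erase a')) - f Z)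
  else 0

section helper
set_option linter.unusedSectionVars false
variable {V : Type*} [Fintype V] [DecidableEq V]

lemma inner_eq_sum (x y : EuclideanSpace ℝ V) : ⟪x, y⟫ = ∑ a, x a * y a := by
  simp [PiLp.inner_apply, RCLike.inner_apply, mul_comm]

lemma norm_sq_eq_sum (x : EuclideanSpace ℝ V) : ‖x‖^2 = ∑ a, (x a)^2 := by
  rw [← real_inner_self_eq_norm_sq, PiLp.inner_apply]
  exact Finset.sum_congr rfl fun i _ => by rw [real_inner_eq_re_inner]; simp [sq]

lemma mem_suppF {x : EuclideanSpace ℝ V} {a : V} : a ∈ suppF x ↔ x a ≠ 0 := by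
  simp [suppF]

lemma suppF_sub_subset (x y : EuclideanSpace ℝ V) :
    suppF (x - y) ⊆ suppF x ∪ suppF y := by
  intro b hb
  rw [mem_suppF] at hb
  rw [Finset.mem_union, mem_suppF, mem_suppF]
  by_contra h
  push_neg at h
  exact hb (by show x b - y b = 0; rw [h.1, h.2, sub_zero])

lemma gain_lemma (s : ℕ) (M : ℝ) (hM : 0 < M)
    (u : EuclideanSpace ℝ V → ℝ)
    (hsmooth : ∀ x y : EuclideanSpace ℝ V,
      (suppF x).card ≤ s → (suppF y).card ≤ s → (suppF (x - y)).card ≤ 2 →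
      u y - u x - ⟪gradient u x, y - x⟫ ≥ -(M / 2) * ‖y - x‖ ^ 2)
    (w : Finset V → EuclideanSpace ℝ V)
    (hw_supp : ∀ Z : Finset V, suppF (w Z) ⊆ Z)
    (hw_max : ∀ Z : Finset V, ∀ z : EuclideanSpace ℝ V, suppF z ⊆ Z → u z ≤ u (w Z))
    (hw_grad : ∀ Z : Finset V, ∀ a ∈ Z, gradient u (w Z) a = 0)
    (Z : Finset V) (hZ : Z.card ≤ s) (a a' : V) (ha : a ∉ Z)
    (hcard : (insert a (Z.erase a')).card ≤ s) :
    (gradient u (w Z) a)^2 / (2*M) - (M/2) * (w Z a')^2 ≤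
      u (w (insert a (Z.erase a'))) - u (w Z) := by
  set x := w Z with hxdef
  set g := gradient u (w Z) with hgdef
  set c := g a / M with hcdef
  set d := x a' with hddef
  have hx0 : ∀ b, b ∉ Z → x b = 0 := by
    intro b hb
    by_contra h
    exact hb (hw_supp Z (mem_suppF.2 h))
  have hd0 : a = a' → d = 0 := by
    intro h; rw [hddef, ← h]; exact hx0 a ha
  set y : EuclideanSpace ℝ V := restr x (Z.erase a') + EuclideanSpace.single a c with hydef
  have hyb : ∀ b, y b = (if b ∈ Z.erase a' then x b else 0) + (if b = a then c else 0) := by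
    intro b
    show restr x (Z.erase a') b + EuclideanSpace.single a c b = _
    rw [EuclideanSpace.single_apply]; simp [restr]
  have hyx : ∀ b, y b - x b = (if b = a then c else 0) - (if b = a' then d else 0) := by
    intro b
    rw [hyb]
    by_cases h1 : b = a
    · subst h1
      have hne : b ∉ Z.erase a' := fun h => ha (Finset.mem_of_mem_erase h)
      by_cases h2 : b = a'
      · rw [if_neg hne, if_pos rfl, if_pos h2, hd0 h2, hx0 b ha]; ring
      · rw [if_neg hne, if_pos rfl, if_neg h2, hx0 b ha]; ring
    · by_cases h2 : b = a'
      · subst h2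
        rw [if_neg (Finset.notMem_erase b Z), if_neg h1, if_pos rfl, hddef]; ring
      · rw [if_neg h1, if_neg h2]
        by_cases h3 : b ∈ Z
        · rw [if_pos (Finset.mem_erase.2 ⟨h2, h3⟩)]; ring
        · rw [if_neg (fun h => h3 (Finset.mem_of_mem_erase h)), hx0 b h3]; ring
  have hsupp_y : suppF y ⊆ insert a (Z.erase a') := by
    intro b hb
    rw [mem_suppF, hyb] at hb
    rw [Finset.mem_insert]
    by_contra h
    push_neg at h
    rw [if_neg h.2, if_neg h.1] at hb
    exact hb (by ring)
  have hsupp_xy : suppF (x - y) ⊆ {a, a'} := by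
    intro b hb
    rw [mem_suppF] at hb
    rw [Finset.mem_insert, Finset.mem_singleton]
    by_contra h
    push_neg at h
    have hxy : x b - y b = 0 := by
      have h4 := hyx b
      rw [if_neg h.1, if_neg h.2] at h4
      have : y b - x b = 0 := by rw [h4]; ring
      linarith
    exact hb hxy
  have hcard_xy : (suppF (x - y)).card ≤ 2 := by
    calc (suppF (x - y)).card ≤ ({a, a'} : Finset V).card := Finset.card_le_card hsupp_xy
    _ ≤ 2 := by
        calc ({a, a'} : Finset V).card ≤ ({a'} : Finset V).card + 1 := Finset.card_insert_le a {a'}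
        _ = 2 := by simp
  have hinner : ⟪g, y - x⟫ = g a * c - g a' * d := by
    rw [inner_eq_sum]
    have hterm : ∀ b, g b * ((y - x) b) =
        (if b = a then g b * c else 0) - (if b = a' then g b * d else 0) := by
      intro b
      have hb : (y - x) b = y b - x b := rfl
      rw [hb, hyx b]
      rcases eq_or_ne b a with h1 | h1
      · subst h1
        rw [if_pos rfl, if_pos rfl]
        rcases eq_or_ne b a' with h2 | h2
        · rw [if_pos h2, if_pos h2, hd0 h2]; ring
        · rw [if_neg h2, if_neg h2]; ring
      · rw [if_neg h1, if_neg h1]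
        rcases eq_or_ne b a' with h2 | h2
        · rw [if_pos h2, if_pos h2]; ring
        · rw [if_neg h2, if_neg h2]; ring
    simp_rw [hterm]
    rw [Finset.sum_sub_distrib, Finset.sum_ite_eq' Finset.univ a (fun b => g b * c),
      Finset.sum_ite_eq' Finset.univ a' (fun b => g b * d)]
    simp
  have hga' : g a' * d = 0 := by
    by_cases h : a' ∈ Z
    · rw [hgdef, hw_grad Z a' h]; ring
    · rw [hddef, hx0 a' h]; ring
  have hnorm : ‖y - x‖^2 = c^2 + d^2 := by
    rw [norm_sq_eq_sum]
    have hterm : ∀ b, ((y - x) b)^2 = (if b = a then c^2 else 0) + (if b = a' then d^2 else 0) := by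
      intro b
      have hb : (y - x) b = y b - x b := rfl
      rw [hb, hyx b]
      rcases eq_or_ne b a with h1 | h1
      · subst h1
        rw [if_pos rfl, if_pos rfl]
        rcases eq_or_ne b a' with h2 | h2
        · rw [if_pos h2, if_pos h2, hd0 h2]; ring
        · rw [if_neg h2, if_neg h2]; ring
      · rw [if_neg h1, if_neg h1]
        rcases eq_or_ne b a' with h2 | h2
        · rw [if_pos h2, if_pos h2]; ring
        · rw [if_neg h2, if_neg h2]; ring
    simp_rw [hterm]
    rw [Finset.sum_add_distrib, Finset.sum_ite_eq' Finset.univ a (fun _ => c^2),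
      Finset.sum_ite_eq' Finset.univ a' (fun _ => d^2)]
    simp
  have hcard_x : (suppF x).card ≤ s := le_trans (Finset.card_le_card (hw_supp Z)) hZ
  have hcard_y : (suppF y).card ≤ s := le_trans (Finset.card_le_card hsupp_y) hcard
  have hsm := hsmooth x y hcard_x hcard_y hcard_xy
  have hmax := hw_max (insert a (Z.erase a')) y hsupp_y
  have harith : g a * c - (M/2)*(c^2 + d^2) = (g a)^2/(2*M) - (M/2)*d^2 := by
    rw [hcdef]; field_simp; ring
  have h1 : u y - u x ≥ g a * c - g a' * d - (M/2) * (c^2 + d^2) := by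
    rw [hinner, hnorm] at hsm
    linarith
  rw [hga'] at h1
  linarith [h1, hmax, harith.ge, harith.le]

end helper

set_option maxHeartbeats 2000000 in
theorem stmt19_aux {V : Type*} [Fintype V] [DecidableEq V]
    (s : ℕ) (hs : 0 < s) (m M : ℝ) (hm : 0 < m) (hmM : m ≤ M)
    (u : EuclideanSpace ℝ V → ℝ) (hu : Differentiable ℝ u)
    (hconc : ∀ x y : EuclideanSpace ℝ V,
      (suppF x).card ≤ 2 * s → (suppF y).card ≤ 2 * s → (suppF (x - y)).card ≤ 2 * s →
      u y - u x - ⟪gradient u x, y - x⟫ ≤ -(m / 2) * ‖y - x‖ ^ 2)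
    (hsmooth : ∀ x y : EuclideanSpace ℝ V,
      (suppF x).card ≤ s → (suppF y).card ≤ s → (suppF (x - y)).card ≤ 2 →
      u y - u x - ⟪gradient u x, y - x⟫ ≥ -(M / 2) * ‖y - x‖ ^ 2)
    (w : Finset V → EuclideanSpace ℝ V)
    (hw_supp : ∀ Z : Finset V, suppF (w Z) ⊆ Z)
    (hw_max : ∀ Z : Finset V, ∀ z : EuclideanSpace ℝ V, suppF z ⊆ Z → u z ≤ u (w Z))
    (hw_grad : ∀ Z : Finset V, ∀ a ∈ Z, gradient u (w Z) a = 0)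
    (Z Zstar : Finset V) (hZ : Z.card ≤ s) (hZstar : Zstar.card ≤ s) :
    ∑ a ∈ Zstar, repGain (fun Y => u (w Y) - u 0) s a Z ≥
      (m / M) * (u (w Zstar) - u 0) - (M / m) * (u (w Z) - u 0) := by
  classical
  have hM : 0 < M := lt_of_lt_of_le hm hmM
  have hx0 : ∀ b, b ∉ Z → w Z b = 0 := by
    intro b hb
    by_contra h
    exact hb (hw_supp Z (mem_suppF.2 h))
  have hy0 : ∀ b, b ∉ Zstar → w Zstar b = 0 := by
    intro b hb
    by_contra h
    exact hb (hw_supp Zstar (mem_suppF.2 h))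
  have hg0 : ∀ b ∈ Z, gradient u (w Z) b = 0 := hw_grad Z
  -- abbreviations
  obtain ⟨G', hG'def⟩ : ∃ r : ℝ, r = ∑ a ∈ Zstar \ Z, (gradient u (w Z) a)^2 := ⟨_, rfl⟩
  obtain ⟨A, hAdef⟩ : ∃ r : ℝ, r = ∑ b ∈ Z \ Zstar, (w Z b)^2 := ⟨_, rfl⟩
  have hA0 : 0 ≤ A := hAdef ▸ Finset.sum_nonneg fun b _ => sq_nonneg _
  have hG0 : 0 ≤ G' := hG'def ▸ Finset.sum_nonneg fun b _ => sq_nonneg _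
  -- support cards
  have hcx : (suppF (w Z)).card ≤ 2 * s :=
    le_trans (Finset.card_le_card (hw_supp Z)) (by omega)
  have hcy : (suppF (w Zstar)).card ≤ 2 * s :=
    le_trans (Finset.card_le_card (hw_supp Zstar)) (by omega)
  have hcxy : (suppF (w Z - w Zstar)).card ≤ 2 * s := by
    have h1 : suppF (w Z - w Zstar) ⊆ Z ∪ Zstar :=
      (suppF_sub_subset _ _).trans (Finset.union_subset_union (hw_supp Z) (hw_supp Zstar))
    calc (suppF (w Z - w Zstar)).card ≤ (Z ∪ Zstar).card := Finset.card_le_card h1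
    _ ≤ Z.card + Zstar.card := Finset.card_union_le _ _
    _ ≤ 2 * s := by omega
  -- concavity: main comparison
  have hconcmain := hconc (w Z) (w Zstar) hcx hcy hcxy
  have hinner : ⟪gradient u (w Z), w Zstar - w Z⟫ =
      ∑ b ∈ Zstar \ Z, gradient u (w Z) b * w Zstar b := by
    rw [inner_eq_sum]
    rw [← Finset.sum_subset (Finset.subset_univ (Zstar \ Z)) ?_]
    · apply Finset.sum_congr rfl
      intro b hb
      have hbZ : b ∉ Z := (Finset.mem_sdiff.1 hb).2
      show gradient u (w Z) b * (w Zstar b - w Z b) = _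
      rw [hx0 b hbZ, sub_zero]
    · intro b _ hb
      by_cases hbZ : b ∈ Z
      · show gradient u (w Z) b * ((w Zstar - w Z) b) = 0
        rw [hg0 b hbZ]; ring
      · have hbZs : b ∉ Zstar := fun h => hb (Finset.mem_sdiff.2 ⟨h, hbZ⟩)
        show gradient u (w Z) b * (w Zstar b - w Z b) = 0
        rw [hx0 b hbZ, hy0 b hbZs]; ring
  have hnormlb : ∑ b ∈ Zstar \ Z, (w Zstar b)^2 + A ≤ ‖w Zstar - w Z‖^2 := by
    rw [norm_sq_eq_sum]
    have hdisj : Disjoint (Zstar \ Z) (Z \ Zstar) := disjoint_sdiff_sdiff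
    have he : ∑ b ∈ Zstar \ Z, (w Zstar b)^2 + A =
        ∑ b ∈ (Zstar \ Z) ∪ (Z \ Zstar), ((w Zstar - w Z) b)^2 := by
      rw [Finset.sum_union hdisj, hAdef]
      congr 1
      · apply Finset.sum_congr rfl
        intro b hb
        show (w Zstar b)^2 = (w Zstar b - w Z b)^2
        rw [hx0 b (Finset.mem_sdiff.1 hb).2, sub_zero]
      · apply Finset.sum_congr rfl
        intro b hb
        show (w Z b)^2 = (w Zstar b - w Z b)^2
        rw [hy0 b (Finset.mem_sdiff.1 hb).2, zero_sub]
        ring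
    rw [he]
    exact Finset.sum_le_sum_of_subset_of_nonneg (Finset.subset_univ _)
      (fun b _ _ => sq_nonneg _)
  have hterm : ∀ b ∈ Zstar \ Z, gradient u (w Z) b * w Zstar b ≤
      (gradient u (w Z) b)^2/(2*m) + (m/2)*(w Zstar b)^2 := by
    intro b _
    have h2 : 2*m*(gradient u (w Z) b * w Zstar b) ≤
        2*m*((gradient u (w Z) b)^2/(2*m) + (m/2)*(w Zstar b)^2) := by
      have he : 2*m*((gradient u (w Z) b)^2/(2*m) + (m/2)*(w Zstar b)^2) =
          (gradient u (w Z) b)^2 + m^2*(w Zstar b)^2 := by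
        field_simp
      nlinarith [sq_nonneg (gradient u (w Z) b - m * w Zstar b)]
    exact le_of_mul_le_mul_left h2 (by linarith)
  have hs1 : ∑ b ∈ Zstar \ Z, gradient u (w Z) b * w Zstar b ≤
      G'/(2*m) + (m/2) * ∑ b ∈ Zstar \ Z, (w Zstar b)^2 := by
    calc ∑ b ∈ Zstar \ Z, gradient u (w Z) b * w Zstar b
        ≤ ∑ b ∈ Zstar \ Z, ((gradient u (w Z) b)^2/(2*m) + (m/2)*(w Zstar b)^2) :=
          Finset.sum_le_sum hterm
    _ = G'/(2*m) + (m/2) * ∑ b ∈ Zstar \ Z, (w Zstar b)^2 := by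
        rw [Finset.sum_add_distrib, ← Finset.sum_div, ← Finset.mul_sum, hG'def]
  have hconc1 : (u (w Zstar) - u 0) - (u (w Z) - u 0) ≤ G'/(2*m) - (m/2)*A := by
    rw [hinner] at hconcmain
    have hmul := mul_le_mul_of_nonneg_left hnormlb (by linarith : (0:ℝ) ≤ m/2)
    rw [mul_add] at hmul
    linarith
  -- bound on A via concavity towards 0
  have hc0supp : (suppF (0 : EuclideanSpace ℝ V)).card ≤ 2 * s := by
    have : suppF (0 : EuclideanSpace ℝ V) = ∅ := by
      ext b; simp [suppF]
    rw [this]; simp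
  have hcxz : (suppF (w Z - 0)).card ≤ 2 * s := by
    rw [sub_zero]; exact hcx
  have hAbd := hconc (w Z) 0 hcx hc0supp hcxz
  have hgx : ⟪gradient u (w Z), (0:EuclideanSpace ℝ V) - w Z⟫ = 0 := by
    rw [inner_eq_sum]
    apply Finset.sum_eq_zero
    intro b _
    show gradient u (w Z) b * ((0:EuclideanSpace ℝ V) b - w Z b) = 0
    by_cases hb : b ∈ Z
    · rw [hg0 b hb]; ring
    · rw [hx0 b hb]
      show gradient u (w Z) b * (0 - 0) = 0
      ring
  have hnx : ‖(0:EuclideanSpace ℝ V) - w Z‖^2 = ‖w Z‖^2 := by rw [zero_sub, norm_neg]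
  have hA_le : A ≤ ‖w Z‖^2 := by
    rw [norm_sq_eq_sum, hAdef]
    exact Finset.sum_le_sum_of_subset_of_nonneg (Finset.subset_univ _)
      (fun b _ _ => sq_nonneg _)
  have hc3 : m * A ≤ 2 * (u (w Z) - u 0) := by
    rw [hgx, hnx] at hAbd
    have := mul_le_mul_of_nonneg_left hA_le hm.le
    linarith
  -- nonnegativity of repGain
  have hDnn : ∀ a, 0 ≤ repGain (fun Y => u (w Y) - u 0) s a Z := by
    intro a
    simp only [repGain]
    split_ifs with h1 h2
    · have := hw_max (insert a Z) (w Z) ((hw_supp Z).trans (Finset.subset_insert a Z))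
      linarith
    · exact le_max_left 0 _
    · exact le_refl 0
  -- key lower bound on the sum over Zstar \ Z
  have key : G'/(2*M) - (M/2)*A ≤
      ∑ a ∈ Zstar \ Z, repGain (fun Y => u (w Y) - u 0) s a Z := by
    by_cases hcase : Z.card < s
    · have hpt : ∀ a ∈ Zstar \ Z,
          (gradient u (w Z) a)^2/(2*M) ≤ repGain (fun Y => u (w Y) - u 0) s a Z := by
        intro a ha
        have haZ : a ∉ Z := (Finset.mem_sdiff.1 ha).2
        have heq : insert a (Z.erase a) = insert a Z := by
          rw [Finset.erase_eq_of_notMem haZ]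
        have hcins : (insert a (Z.erase a)).card ≤ s := by
          rw [heq, Finset.card_insert_of_notMem haZ]; omega
        have hg := gain_lemma s M hM u hsmooth w hw_supp hw_max hw_grad Z hZ a a haZ hcins
        rw [heq, hx0 a haZ] at hg
        simp only [repGain, if_pos hcase]
        linarith [hg]
      calc G'/(2*M) - (M/2)*A ≤ G'/(2*M) := by
            have h6 : 0 ≤ (M/2)*A := mul_nonneg (by linarith) hA0
            linarith
      _ = ∑ a ∈ Zstar \ Z, (gradient u (w Z) a)^2/(2*M) := by
          rw [hG'def, Finset.sum_div]
      _ ≤ _ := Finset.sum_le_sum hpt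
    · have hZcard : Z.card = s := le_antisymm hZ (not_lt.1 hcase)
      have hZne : Z.Nonempty := Finset.card_pos.1 (by omega)
      by_cases hne : (Zstar \ Z).Nonempty
      · have hcards : (Zstar \ Z).card ≤ (Z \ Zstar).card := by
          have h1 := Finset.card_sdiff_add_card_inter Zstar Z
          have h2 := Finset.card_sdiff_add_card_inter Z Zstar
          have h3 : (Zstar ∩ Z).card = (Z ∩ Zstar).card := by rw [Finset.inter_comm]
          omega
        have hZZne : (Z \ Zstar).Nonempty := by
          rw [← Finset.card_pos]
          have := Finset.card_pos.2 hne
          omega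
        obtain ⟨a0, ha0mem, ha0min⟩ :=
          Finset.exists_min_image (Z \ Zstar) (fun b => (w Z b)^2) hZZne
        have ha0Z : a0 ∈ Z := (Finset.mem_sdiff.1 ha0mem).1
        have hpt : ∀ a ∈ Zstar \ Z,
            (gradient u (w Z) a)^2/(2*M) - (M/2)*(w Z a0)^2 ≤
              repGain (fun Y => u (w Y) - u 0) s a Z := by
          intro a ha
          have haZ : a ∉ Z := (Finset.mem_sdiff.1 ha).2
          have hcins : (insert a (Z.erase a0)).card ≤ s := by
            have h1 : (Z.erase a0).card = Z.card - 1 := Finset.card_erase_of_mem ha0Z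
            have h2 := Finset.card_insert_le a (Z.erase a0)
            omega
          have hg := gain_lemma s M hM u hsmooth w hw_supp hw_max hw_grad Z hZ a a0 haZ hcins
          simp only [repGain, if_neg hcase, dif_pos hZne]
          refine le_trans ?_ (le_max_right 0 _)
          refine le_trans ?_ (Finset.le_sup'
            (fun a' => (u (w (insert a (Z.erase a'))) - u 0) - (u (w Z) - u 0)) ha0Z)
          linarith
        calc G'/(2*M) - (M/2)*A
            ≤ G'/(2*M) - (M/2)*(((Zstar \ Z).card : ℝ) * (w Z a0)^2) := by
              have hcA : ((Zstar \ Z).card : ℝ) * (w Z a0)^2 ≤ A := by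
                calc ((Zstar \ Z).card : ℝ) * (w Z a0)^2
                    ≤ ((Z \ Zstar).card : ℝ) * (w Z a0)^2 := by
                      apply mul_le_mul_of_nonneg_right _ (sq_nonneg _)
                      exact_mod_cast hcards
                _ ≤ A := by
                      have h4 := Finset.card_nsmul_le_sum (Z \ Zstar)
                        (fun b => (w Z b)^2) ((w Z a0)^2) (fun b hb => ha0min b hb)
                      rw [nsmul_eq_mul] at h4
                      rw [hAdef]
                      exact h4
              have h6 := mul_le_mul_of_nonneg_left hcA (by linarith : (0:ℝ) ≤ M/2)
              linarith
        _ = ∑ a ∈ Zstar \ Z, ((gradient u (w Z) a)^2/(2*M) - (M/2)*(w Z a0)^2) := by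
              rw [Finset.sum_sub_distrib, Finset.sum_const, ← Finset.sum_div, hG'def,
                nsmul_eq_mul]
              ring
        _ ≤ _ := Finset.sum_le_sum hpt
      · have hem : Zstar \ Z = ∅ := Finset.not_nonempty_iff_eq_empty.1 hne
        have hG'0 : G' = 0 := by rw [hG'def, hem, Finset.sum_empty]
        rw [hem, hG'0, Finset.sum_empty]
        have h6 : 0 ≤ (M/2)*A := mul_nonneg (by linarith) hA0
        rw [zero_div]
        linarith
  have hsum1 : ∑ a ∈ Zstar \ Z, repGain (fun Y => u (w Y) - u 0) s a Z ≤
      ∑ a ∈ Zstar, repGain (fun Y => u (w Y) - u 0) s a Z :=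
    Finset.sum_le_sum_of_subset_of_nonneg Finset.sdiff_subset (fun a _ _ => hDnn a)
  have hP : G'/(2*M) - (M/2)*A ≤ ∑ a ∈ Zstar, repGain (fun Y => u (w Y) - u 0) s a Z :=
    le_trans key hsum1
  -- final arithmetic
  obtain ⟨P, hPdef⟩ : ∃ r : ℝ, r = ∑ a ∈ Zstar, repGain (fun Y => u (w Y) - u 0) s a Z := ⟨_, rfl⟩
  rw [← hPdef] at hP ⊢
  have c1 : 2*m^2*(u (w Zstar) - u 0) - 2*m^2*(u (w Z) - u 0) ≤ m*G' - m^3*A := by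
    have he : 2*m^2*(G'/(2*m) - (m/2)*A) = m*G' - m^3*A := by
      field_simp
    have h5 := mul_le_mul_of_nonneg_left hconc1 (by positivity : (0:ℝ) ≤ 2*m^2)
    rw [mul_sub] at h5
    linarith
  have c2 : m*G' - m*M^2*A ≤ 2*m*M*P := by
    have he : 2*m*M*(G'/(2*M) - (M/2)*A) = m*G' - m*M^2*A := by
      field_simp
    have h5 := mul_le_mul_of_nonneg_left hP (by positivity : (0:ℝ) ≤ 2*m*M)
    linarith
  have c5 : 0 ≤ (M^2 - m^2) * (2*(u (w Z) - u 0) - m*A) := by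
    apply mul_nonneg
    · nlinarith [hm.le, hmM]
    · linarith
  have goalpoly : 2*m^2*(u (w Zstar) - u 0) - 2*M^2*(u (w Z) - u 0) ≤ 2*m*M*P := by
    nlinarith [c1, c2, c5]
  rw [ge_iff_le, div_mul_eq_mul_div, div_mul_eq_mul_div,
    div_sub_div _ _ (ne_of_gt hM) (ne_of_gt hm), div_le_iff₀ (by positivity : (0:ℝ) < M * m)]
  linarith [goalpoly]

/-- per-step inequality for the online replacement gains,
`∑_{a ∈ Z*} Δ(a, Z) ≥ (m_{2s}/M_{s,2})·f(Z*) - (M_{s,2}/m_{2s})·f(Z)`. -/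
theorem stmt19 {V : Type*} [Fintype V] [DecidableEq V]
    (s : ℕ) (hs : 0 < s) (m M : ℝ) (hm : 0 < m) (hmM : m ≤ M)
    (u : EuclideanSpace ℝ V → ℝ) (hu : Differentiable ℝ u)
    (hconc : ∀ x y : EuclideanSpace ℝ V,
      (suppF x).card ≤ 2 * s → (suppF y).card ≤ 2 * s → (suppF (x - y)).card ≤ 2 * s →
      u y - u x - ⟪gradient u x, y - x⟫ ≤ -(m / 2) * ‖y - x‖ ^ 2)
    (hsmooth : ∀ x y : EuclideanSpace ℝ V,
      (suppF x).card ≤ s → (suppF y).card ≤ s → (suppF (x - y)).card ≤ 2 →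
      u y - u x - ⟪gradient u x, y - x⟫ ≥ -(M / 2) * ‖y - x‖ ^ 2)
    (w : Finset V → EuclideanSpace ℝ V)
    (hw_supp : ∀ Z : Finset V, suppF (w Z) ⊆ Z)
    (hw_max : ∀ Z : Finset V, ∀ z : EuclideanSpace ℝ V, suppF z ⊆ Z → u z ≤ u (w Z))
    (hw_grad : ∀ Z : Finset V, ∀ a ∈ Z, gradient u (w Z) a = 0)
    (Z Zstar : Finset V) (hZ : Z.card ≤ s) (hZstar : Zstar.card ≤ s) :
    ∑ a ∈ Zstar, repGain (fun Y => u (w Y) - u 0) s a Z ≥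
      (m / M) * (u (w Zstar) - u 0) - (M / m) * (u (w Z) - u 0) :=
  stmt19_aux s hs m M hm hmM u hu hconc hsmooth w hw_supp hw_max hw_grad Z Zstar hZ hZstar
end
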